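/- Let n ≥ 1, I₁ ≥ I₂ and I₄ ≥ I₂, and let X : ZMod n → Matrix (Fin I₁) (Fin I₂) ℝ and Y : ZMod n → Matrix (Fin I₄) (Fin I₂) ℝ be third-order real tensors. Then there exist tensors U : ZMod n → Matrix (Fin I₁) (Fin I₁) ℝ and V : ZMod n → Matrix (Fin I₄) (Fin I₄) ℝ that are orthogonal under the t-product, a tensor Z : ZMod n → Matrix (Fin I₂) (Fin I₂) ℝ that is invertible under the t-product (there exists Z' with Z ∗ Z' = Z' ∗ Z = I), and f-diagonal tensors C : ZMod n → Matrix (Fin I₁) (Fin I₂) ℝ and S : ZMod n → Matrix (Fin I₄) (Fin I₂) ℝ, such that X = U ∗ C ∗ Z and Y = V ∗ S ∗ Z (generalized tensor SVD, GTSVD). -/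

import Mathlib

open Matrix

variable {n : ℕ}

/-- The t-product of two third-order tensors, modeled as circular convolution
of frontal slices. -/
noncomputable def tMul [NeZero n] {a b c : ℕ}
    (X : ZMod n → Matrix (Fin a) (Fin b) ℝ) (Y : ZMod n → Matrix (Fin b) (Fin c) ℝ) :
    ZMod n → Matrix (Fin a) (Fin c) ℝ :=
  fun k => ∑ j : ZMod n, X (k - j) * Y j

/-- The tensor transpose: transpose every frontal slice and reverse the order of
the frontal slices 2 through n. -/
def tTranspose {a b : ℕ} (X : ZMod n → Matrix (Fin a) (Fin b) ℝ) :
    ZMod n → Matrix (Fin b) (Fin a) ℝ :=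
  fun k => (X (-k))ᵀ

/-- The identity tensor: the first frontal slice is the identity matrix and all
other frontal slices are zero. -/
def tId (n m : ℕ) : ZMod n → Matrix (Fin m) (Fin m) ℝ :=
  fun k => if k = 0 then 1 else 0

/-- A tensor is orthogonal if `Qᵀ ∗ Q = Q ∗ Qᵀ = I` under the t-product. -/
def tOrthogonal [NeZero n] {m : ℕ} (Q : ZMod n → Matrix (Fin m) (Fin m) ℝ) : Prop :=
  tMul (tTranspose Q) Q = tId n m ∧ tMul Q (tTranspose Q) = tId n m

open scoped ComplexOrder

section GSVD
variable {𝕜 : Type*} [RCLike 𝕜]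

lemma psd_entry_eq_zero {m : ℕ} {A : Matrix (Fin m) (Fin m) 𝕜} (hA : A.PosSemidef)
    {i : Fin m} (h : A i i = 0) (j : Fin m) : A i j = 0 ∧ A j i = 0 := by
  obtain ⟨B, rfl⟩ : ∃ B : Matrix (Fin m) (Fin m) 𝕜, A = Bᴴ * B := by
    open scoped MatrixOrder in
    exact CStarAlgebra.nonneg_iff_eq_star_mul_self.mp hA.nonneg
  have hii : (Bᴴ * B) i i = RCLike.ofReal (∑ l, ‖B l i‖ ^ 2) := by
    simp [Matrix.mul_apply, Matrix.conjTranspose_apply, RCLike.conj_mul]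
  rw [hii] at h
  have hsum : (∑ l, ‖B l i‖ ^ 2) = 0 := by exact_mod_cast h
  have hcol : ∀ l, B l i = 0 := by
    intro l
    have := (Finset.sum_eq_zero_iff_of_nonneg (fun l _ => sq_nonneg ‖B l i‖)).mp hsum l
      (Finset.mem_univ l)
    simpa [pow_eq_zero_iff] using this
  constructor <;>
  · simp [Matrix.mul_apply, Matrix.conjTranspose_apply, hcol]

lemma psd_diag_self_conj {m : ℕ} {A : Matrix (Fin m) (Fin m) 𝕜} (hA : A.PosSemidef)
    (i : Fin m) : star (A i i) = A i i ∧ 0 ≤ RCLike.re (A i i) := by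
  constructor
  · conv_rhs => rw [← hA.1]
    simp [Matrix.conjTranspose_apply]
  · have := hA.re_dotProduct_nonneg (Pi.single i 1)
    simpa [dotProduct, Matrix.mulVec, Pi.single_apply, Finset.sum_ite_eq,
      dotProduct_single] using this

lemma psd_diag_zero_of_add {m : ℕ} {A B : Matrix (Fin m) (Fin m) 𝕜}
    (hA : A.PosSemidef) (hB : B.PosSemidef) {i : Fin m}
    (h : A i i + B i i = 0) : A i i = 0 ∧ B i i = 0 := by
  obtain ⟨ha1, ha2⟩ := psd_diag_self_conj hA i
  obtain ⟨hb1, hb2⟩ := psd_diag_self_conj hB i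
  have hre : RCLike.re (A i i) + RCLike.re (B i i) = 0 := by
    rw [← map_add, h, map_zero]
  have hAre : RCLike.re (A i i) = 0 := le_antisymm (by linarith) ha2
  have hBre : RCLike.re (B i i) = 0 := by linarith
  constructor
  · rw [← RCLike.conj_eq_iff_re.mp ha1, hAre, RCLike.ofReal_zero]
  · rw [← RCLike.conj_eq_iff_re.mp hb1, hBre, RCLike.ofReal_zero]

/-- Stage 2: two PSD matrices summing to a 0/1 diagonal can be simultaneously
diagonalized by a unitary. -/
lemma simdiag_of_proj {m : ℕ} {A₂ B₂ : Matrix (Fin m) (Fin m) 𝕜}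
    (hA₂ : A₂.PosSemidef) (hB₂ : B₂.PosSemidef) (g : Fin m → 𝕜)
    (hg : ∀ i, g i = 0 ∨ g i = 1) (hsum : A₂ + B₂ = Matrix.diagonal g) :
    ∃ P : Matrix (Fin m) (Fin m) 𝕜, Pᴴ * P = 1 ∧ P * Pᴴ = 1 ∧
      (∀ i j, i ≠ j → (Pᴴ * A₂ * P) i j = 0) ∧ (∀ i j, i ≠ j → (Pᴴ * B₂ * P) i j = 0) := by
  classical
  set J : Matrix (Fin m) (Fin m) 𝕜 := Matrix.diagonal g with hJdef
  have hgstar : star g = g := by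
    funext i; rcases hg i with h | h <;> simp [h]
  have hJherm : J.IsHermitian := by
    rw [Matrix.IsHermitian, hJdef, Matrix.diagonal_conjTranspose, hgstar]
  have hJpsd : J.PosSemidef := by
    rw [hJdef]
    refine Matrix.posSemidef_diagonal_iff.mpr fun i => ?_
    rcases hg i with h | h <;> simp [h]
  have hA2diag : ∀ i, g i = 0 → ∀ j, A₂ i j = 0 ∧ A₂ j i = 0 := by
    intro i hgi
    have h2 := congrFun (congrFun hsum i) i
    rw [hJdef] at h2
    have hii : A₂ i i + B₂ i i = 0 := by
      simpa [Matrix.add_apply, Matrix.diagonal_apply_eq, hgi] using h2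
    exact psd_entry_eq_zero hA₂ (psd_diag_zero_of_add hA₂ hB₂ hii).1
  have hJA : J * A₂ = A₂ := by
    ext i j
    rw [hJdef, Matrix.diagonal_mul]
    rcases hg i with h | h
    · rw [h, zero_mul, (hA2diag i h j).1]
    · rw [h, one_mul]
  have hJJ : J * J = J := by
    have hgg : (fun i => g i * g i) = g := by
      funext i; rcases hg i with h | h <;> simp [h]
    rw [hJdef, Matrix.diagonal_mul_diagonal, hgg]
  set H : Matrix (Fin m) (Fin m) 𝕜 := A₂ + (J + J) with hHdef
  have hHherm : H.IsHermitian := (hA₂.1.add (hJherm.add hJherm))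
  set P : Matrix (Fin m) (Fin m) 𝕜 := (hHherm.eigenvectorUnitary : Matrix (Fin m) (Fin m) 𝕜)
    with hPdef
  set f : Fin m → ℝ := hHherm.eigenvalues with hfdef
  set D : Matrix (Fin m) (Fin m) 𝕜 := Matrix.diagonal (RCLike.ofReal ∘ f) with hDdef
  have hP1 : Pᴴ * P = 1 := Matrix.mem_unitaryGroup_iff'.mp (hHherm.eigenvectorUnitary).2
  have hP2 : P * Pᴴ = 1 := Matrix.mem_unitaryGroup_iff.mp (hHherm.eigenvectorUnitary).2
  have hspec : H = P * D * Pᴴ := hHherm.spectral_theorem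
  have h1 : Pᴴ * H * P = D := by
    rw [hspec]
    simp only [Matrix.mul_assoc]
    rw [hP1, Matrix.mul_one, ← Matrix.mul_assoc, hP1, Matrix.one_mul]
  set K : Matrix (Fin m) (Fin m) 𝕜 := Pᴴ * J * P with hKdef
  have hKpsd : K.PosSemidef := hJpsd.conjTranspose_mul_mul_same P
  set L : Matrix (Fin m) (Fin m) 𝕜 := Pᴴ * A₂ * P with hLdef
  have hLpsd : L.PosSemidef := hA₂.conjTranspose_mul_mul_same P
  have hJH : J * H = H := by
    rw [hHdef, Matrix.mul_add, Matrix.mul_add, hJA, hJJ]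
  have hKD : K * D = D := by
    rw [hKdef, ← h1]
    simp only [Matrix.mul_assoc]
    rw [← Matrix.mul_assoc P Pᴴ, hP2, Matrix.one_mul, ← Matrix.mul_assoc J H, hJH]
  have hA2H : A₂ = H - (J + J) := by rw [hHdef]; abel
  have hL : L = D - (K + K) := by
    rw [hLdef, hA2H, Matrix.mul_sub, Matrix.sub_mul, h1, Matrix.mul_add, Matrix.add_mul, hKdef]
  have hKoff : ∀ i j, i ≠ j → K i j = 0 := by
    intro i j hij
    by_cases hfj : f j = 0
    · have hLjj : L j j = -(K j j + K j j) := by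
        rw [hL, hDdef]
        simp [Matrix.sub_apply, Matrix.add_apply, Matrix.diagonal_apply_eq, hfj,
          Function.comp]
      have hKjj : K j j = 0 := by
        obtain ⟨hk1, hk2⟩ := psd_diag_self_conj hKpsd j
        obtain ⟨_, hl2⟩ := psd_diag_self_conj hLpsd j
        have hrel : RCLike.re (L j j) = -(RCLike.re (K j j) + RCLike.re (K j j)) := by
          rw [hLjj]; simp
        have hre0 : RCLike.re (K j j) = 0 := by linarith
        rw [← RCLike.conj_eq_iff_re.mp hk1, hre0, RCLike.ofReal_zero]
      exact (psd_entry_eq_zero hKpsd hKjj i).2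
    · have h2 := congrFun (congrFun hKD i) j
      rw [hDdef, Matrix.mul_diagonal, Matrix.diagonal_apply_ne _ hij] at h2
      have hne : (RCLike.ofReal (f j) : 𝕜) ≠ 0 := by simpa using hfj
      exact (mul_eq_zero.mp h2).resolve_right (by simpa [Function.comp] using hne)
  have hLoff : ∀ i j, i ≠ j → L i j = 0 := by
    intro i j hij
    rw [hL, hDdef]
    simp [Matrix.sub_apply, Matrix.add_apply, Matrix.diagonal_apply_ne _ hij, hKoff i j hij]
  refine ⟨P, hP1, hP2, fun i j hij => hLoff i j hij, ?_⟩
  intro i j hij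
  have hB2 : B₂ = J - A₂ := by rw [← hsum]; abel
  have hPB : Pᴴ * B₂ * P = K - L := by
    rw [hB2, Matrix.mul_sub, Matrix.sub_mul, hKdef, hLdef]
  rw [hPB]
  simp [Matrix.sub_apply, hKoff i j hij, hLoff i j hij]

lemma simdiag {m : ℕ} {A B : Matrix (Fin m) (Fin m) 𝕜} (hA : A.PosSemidef) (hB : B.PosSemidef) :
    ∃ W : Matrix (Fin m) (Fin m) 𝕜, IsUnit W ∧
      (∀ i j, i ≠ j → (Wᴴ * A * W) i j = 0) ∧ (∀ i j, i ≠ j → (Wᴴ * B * W) i j = 0) := by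
  classical
  have hM : (A + B).PosSemidef := hA.add hB
  set Q : Matrix (Fin m) (Fin m) 𝕜 := (hM.1.eigenvectorUnitary : Matrix (Fin m) (Fin m) 𝕜)
    with hQdef
  set d : Fin m → ℝ := hM.1.eigenvalues with hddef
  have hd : ∀ i, 0 ≤ d i := hM.eigenvalues_nonneg
  have hQ1 : Qᴴ * Q = 1 := Matrix.mem_unitaryGroup_iff'.mp (hM.1.eigenvectorUnitary).2
  have hQ2 : Q * Qᴴ = 1 := Matrix.mem_unitaryGroup_iff.mp (hM.1.eigenvectorUnitary).2
  set e : Fin m → 𝕜 := fun i => if d i = 0 then (1 : 𝕜)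
      else (RCLike.ofReal (Real.sqrt (d i)))⁻¹ with hedef
  set E : Matrix (Fin m) (Fin m) 𝕜 := Matrix.diagonal e with hEdef
  set g : Fin m → 𝕜 := fun i => if d i = 0 then (0 : 𝕜) else 1 with hgdef
  have hEH : Eᴴ = E := by
    rw [hEdef, Matrix.diagonal_conjTranspose]
    have : star e = e := by
      funext i
      rw [hedef]
      by_cases h : d i = 0 <;>
        simp [h, Pi.star_apply, star_inv₀, RCLike.star_def, RCLike.conj_ofReal]
    rw [this]
  set W₂ : Matrix (Fin m) (Fin m) 𝕜 := Q * E with hW2def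
  have hspec : A + B = Q * Matrix.diagonal (RCLike.ofReal ∘ d) * Qᴴ := hM.1.spectral_theorem
  have hW2M : W₂ᴴ * (A + B) * W₂ = Matrix.diagonal g := by
    rw [hW2def, Matrix.conjTranspose_mul, hEH, hspec]
    simp only [Matrix.mul_assoc]
    rw [show Qᴴ * (Q * E) = E by rw [← Matrix.mul_assoc, hQ1, Matrix.one_mul]]
    rw [show Qᴴ * (Q * (Matrix.diagonal (RCLike.ofReal ∘ d) * E))
        = Matrix.diagonal (RCLike.ofReal ∘ d) * E by
      rw [← Matrix.mul_assoc, hQ1, Matrix.one_mul]]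
    rw [hEdef, ← Matrix.mul_assoc, Matrix.diagonal_mul_diagonal, Matrix.diagonal_mul_diagonal]
    refine congrArg Matrix.diagonal (funext fun i => ?_)
    by_cases h : d i = 0
    · simp [hedef, hgdef, h, Function.comp]
    · have hs : Real.sqrt (d i) ≠ 0 := by
        rw [Real.sqrt_ne_zero (hd i)]; exact h
      simp only [hedef, hgdef, h, if_false, Function.comp_apply]
      have hr : (Real.sqrt (d i))⁻¹ * d i * (Real.sqrt (d i))⁻¹ = 1 := by
        field_simp
        rw [Real.sq_sqrt (hd i)]
      have hcast : ((RCLike.ofReal (Real.sqrt (d i)))⁻¹ * RCLike.ofReal (d i)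
          * (RCLike.ofReal (Real.sqrt (d i)))⁻¹ : 𝕜)
          = RCLike.ofReal ((Real.sqrt (d i))⁻¹ * d i * (Real.sqrt (d i))⁻¹) := by
        push_cast
        ring
      rw [hcast, hr, RCLike.ofReal_one]
  have hA₂ : (W₂ᴴ * A * W₂).PosSemidef := hA.conjTranspose_mul_mul_same W₂
  have hB₂ : (W₂ᴴ * B * W₂).PosSemidef := hB.conjTranspose_mul_mul_same W₂
  have hg01 : ∀ i, g i = 0 ∨ g i = 1 := by
    intro i; rw [hgdef]; by_cases h : d i = 0 <;> simp [h]
  have hsum2 : W₂ᴴ * A * W₂ + W₂ᴴ * B * W₂ = Matrix.diagonal g := by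
    rw [← hW2M, Matrix.mul_add, Matrix.add_mul]
  obtain ⟨P, hP1, hP2, hPA, hPB⟩ := simdiag_of_proj hA₂ hB₂ g hg01 hsum2
  refine ⟨W₂ * P, ?_, ?_, ?_⟩
  · have hQu : IsUnit Q := isUnit_iff_exists.mpr ⟨Qᴴ, hQ2, hQ1⟩
    have hPu : IsUnit P := isUnit_iff_exists.mpr ⟨Pᴴ, hP2, hP1⟩
    have hEu : IsUnit E := by
      rw [Matrix.isUnit_iff_isUnit_det, hEdef, Matrix.det_diagonal]
      rw [isUnit_iff_ne_zero]
      refine Finset.prod_ne_zero_iff.mpr fun i _ => ?_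
      rw [hedef]
      by_cases h : d i = 0
      · simp [h]
      · have hs : Real.sqrt (d i) ≠ 0 := by rw [Real.sqrt_ne_zero (hd i)]; exact h
        have : (RCLike.ofReal (Real.sqrt (d i)) : 𝕜) ≠ 0 := by exact_mod_cast hs
        simp [h, inv_ne_zero this]
    exact ((hQu.mul hEu).mul hPu)
  · intro i j hij
    have hassoc : (W₂ * P)ᴴ * A * (W₂ * P) = Pᴴ * (W₂ᴴ * A * W₂) * P := by
      rw [Matrix.conjTranspose_mul]
      simp only [Matrix.mul_assoc]
    rw [hassoc]
    exact hPA i j hij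
  · intro i j hij
    have hassoc : (W₂ * P)ᴴ * B * (W₂ * P) = Pᴴ * (W₂ᴴ * B * W₂) * P := by
      rw [Matrix.conjTranspose_mul]
      simp only [Matrix.mul_assoc]
    rw [hassoc]
    exact hPB i j hij


lemma exists_unitary_mul_diag {I₁ I₂ : ℕ} (h : I₂ ≤ I₁) (A : Matrix (Fin I₁) (Fin I₂) 𝕜)
    (hA : ∀ p q, p ≠ q → (Aᴴ * A) p q = 0) :
    ∃ (U : Matrix (Fin I₁) (Fin I₁) 𝕜) (C : Matrix (Fin I₁) (Fin I₂) 𝕜),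
      Uᴴ * U = 1 ∧ U * Uᴴ = 1 ∧ (∀ (i : Fin I₁) (j : Fin I₂), (i : ℕ) ≠ (j : ℕ) → C i j = 0) ∧
      A = U * C := by
  classical
  set col : Fin I₂ → EuclideanSpace 𝕜 (Fin I₁) := fun j => WithLp.toLp 2 (fun i => A i j) with hcol
  have hinner : ∀ p q, (inner 𝕜 (col p) (col q) : 𝕜) = (Aᴴ * A) p q := by
    intro p q
    rw [PiLp.inner_apply]
    simp [hcol, Matrix.mul_apply, Matrix.conjTranspose_apply, RCLike.inner_apply]
    exact Finset.sum_congr rfl fun x _ => mul_comm _ _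
  set f : Fin I₂ → EuclideanSpace 𝕜 (Fin I₁) :=
    fun j => ((RCLike.ofReal ‖col j‖ : 𝕜))⁻¹ • col j with hf
  set emb : Fin I₂ → Fin I₁ := fun j => Fin.castLE h j with hemb
  have hembinj : Function.Injective emb := fun a b hab => by
    apply Fin.ext
    have := congrArg (fun x : Fin I₁ => (x : ℕ)) hab
    simpa [hemb] using this
  set v : Fin I₁ → EuclideanSpace 𝕜 (Fin I₁) := fun i =>
    if hex : ∃ j, emb j = i ∧ col j ≠ 0 then f hex.choose else 0 with hv
  set s : Set (Fin I₁) := {i | ∃ j, emb j = i ∧ col j ≠ 0} with hs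
  have hvspec : ∀ j, col j ≠ 0 → v (emb j) = f j := by
    intro j hj
    have hex : ∃ j', emb j' = emb j ∧ col j' ≠ 0 := ⟨j, rfl, hj⟩
    rw [hv]
    simp only [dif_pos hex]
    have : hex.choose = j := hembinj hex.choose_spec.1
    rw [this]
  have hnorm : ∀ j, col j ≠ 0 → (RCLike.ofReal ‖col j‖ : 𝕜) ≠ 0 := by
    intro j hj
    simpa using norm_ne_zero_iff.mpr hj
  have hforth : ∀ j₁ j₂, col j₁ ≠ 0 → col j₂ ≠ 0 →
      (inner 𝕜 (f j₁) (f j₂) : 𝕜) = if j₁ = j₂ then 1 else 0 := by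
    intro j₁ j₂ h1 h2
    rw [hf]
    simp only [inner_smul_left, inner_smul_right]
    by_cases hjj : j₁ = j₂
    · subst hjj
      rw [if_pos rfl, inner_self_eq_norm_sq_to_K]
      rw [map_inv₀, RCLike.conj_ofReal]
      have hr := hnorm j₁ h1
      field_simp
    · rw [if_neg hjj, hinner, hA j₁ j₂ hjj, mul_zero, mul_zero]
  have horth : Orthonormal 𝕜 (s.restrict v) := by
    rw [orthonormal_iff_ite]
    rintro ⟨i1, hi1⟩ ⟨i2, hi2⟩
    obtain ⟨j₁, rfl, hj₁⟩ := hi1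
    obtain ⟨j₂, rfl, hj₂⟩ := hi2
    change inner 𝕜 (v (emb j₁)) (v (emb j₂)) = _
    rw [hvspec j₁ hj₁, hvspec j₂ hj₂,
      hforth j₁ j₂ hj₁ hj₂]
    by_cases hjj : j₁ = j₂
    · subst hjj; simp
    · rw [if_neg hjj, if_neg]
      intro hcon
      exact hjj (hembinj (Subtype.mk_eq_mk.mp hcon))
  have hcard : Module.finrank 𝕜 (EuclideanSpace 𝕜 (Fin I₁)) = Fintype.card (Fin I₁) := by
    simp [finrank_euclideanSpace]
  obtain ⟨b, hb⟩ := horth.exists_orthonormalBasis_extension_of_card_eq hcard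
  set U : Matrix (Fin I₁) (Fin I₁) 𝕜 := Matrix.of (fun i l => b l i) with hU
  have hU1 : Uᴴ * U = 1 := by
    ext l l'
    rw [Matrix.mul_apply, Matrix.one_apply]
    have hbo := (orthonormal_iff_ite.mp b.orthonormal) l l'
    rw [← hbo, PiLp.inner_apply]
    simp [hU, Matrix.conjTranspose_apply, RCLike.inner_apply]
    exact Finset.sum_congr rfl fun x _ => mul_comm _ _
  have hU2 : U * Uᴴ = 1 := mul_eq_one_comm.mp hU1
  set C : Matrix (Fin I₁) (Fin I₂) 𝕜 := Matrix.of
    (fun l j => if (l : ℕ) = (j : ℕ) then (RCLike.ofReal ‖col j‖ : 𝕜) else 0) with hC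
  refine ⟨U, C, hU1, hU2, ?_, ?_⟩
  · intro i j hij
    rw [hC]
    simp [hij]
  · ext i j
    rw [Matrix.mul_apply]
    rw [Finset.sum_eq_single (emb j)]
    · have hCj : C (emb j) j = (RCLike.ofReal ‖col j‖ : 𝕜) := by
        rw [hC]
        simp [hemb]
      rw [hCj]
      by_cases hj : col j = 0
      · have hz : A i j = 0 := by
          have := congrArg (fun x => x i) hj
          simpa [hcol] using this
        rw [hz, hj]
        simp
      · have hmem : emb j ∈ s := ⟨j, rfl, hj⟩
        have hbv : b (emb j) = v (emb j) := hb _ hmem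
        have hUi : U i (emb j) = ((RCLike.ofReal ‖col j‖ : 𝕜))⁻¹ * A i j := by
          rw [hU]
          show b (emb j) i = _
          rw [hbv, hvspec j hj, hf]
          simp [hcol]
        rw [hUi]
        have hnj := hnorm j hj
        field_simp
    · intro l _ hl
      have hln : (l : ℕ) ≠ (j : ℕ) := by
        intro hcon
        apply hl
        apply Fin.ext
        simpa [hemb] using hcon
      rw [hC]
      simp [hln]
    · intro hcon
      exact absurd (Finset.mem_univ _) hcon


/-- GSVD over an `RCLike` field. -/
theorem gsvdK {I₁ I₂ I₄ : ℕ} (h₁ : I₂ ≤ I₁) (h₄ : I₂ ≤ I₄)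
    (X : Matrix (Fin I₁) (Fin I₂) 𝕜) (Y : Matrix (Fin I₄) (Fin I₂) 𝕜) :
    ∃ (U : Matrix (Fin I₁) (Fin I₁) 𝕜) (V : Matrix (Fin I₄) (Fin I₄) 𝕜)
      (Z Z' : Matrix (Fin I₂) (Fin I₂) 𝕜) (C : Matrix (Fin I₁) (Fin I₂) 𝕜)
      (S : Matrix (Fin I₄) (Fin I₂) 𝕜),
      Uᴴ * U = 1 ∧ U * Uᴴ = 1 ∧ Vᴴ * V = 1 ∧ V * Vᴴ = 1 ∧
      Z * Z' = 1 ∧ Z' * Z = 1 ∧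
      (∀ (i : Fin I₁) (j : Fin I₂), (i : ℕ) ≠ (j : ℕ) → C i j = 0) ∧
      (∀ (i : Fin I₄) (j : Fin I₂), (i : ℕ) ≠ (j : ℕ) → S i j = 0) ∧
      X = U * C * Z ∧ Y = V * S * Z := by
  classical
  obtain ⟨W, hW, hWA, hWB⟩ := simdiag (Matrix.posSemidef_conjTranspose_mul_self X)
    (Matrix.posSemidef_conjTranspose_mul_self Y)
  have hWdet : IsUnit W.det := (Matrix.isUnit_iff_isUnit_det W).mp hW
  have hWinv : W * W⁻¹ = 1 := Matrix.mul_nonsing_inv W hWdet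
  have hWinv' : W⁻¹ * W = 1 := Matrix.nonsing_inv_mul W hWdet
  have hXW : ∀ p q, p ≠ q → ((X * W)ᴴ * (X * W)) p q = 0 := by
    intro p q hpq
    have : (X * W)ᴴ * (X * W) = Wᴴ * (Xᴴ * X) * W := by
      rw [Matrix.conjTranspose_mul]
      simp only [Matrix.mul_assoc]
    rw [this]
    exact hWA p q hpq
  have hYW : ∀ p q, p ≠ q → ((Y * W)ᴴ * (Y * W)) p q = 0 := by
    intro p q hpq
    have : (Y * W)ᴴ * (Y * W) = Wᴴ * (Yᴴ * Y) * W := by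
      rw [Matrix.conjTranspose_mul]
      simp only [Matrix.mul_assoc]
    rw [this]
    exact hWB p q hpq
  obtain ⟨U, C, hU1, hU2, hCd, hUC⟩ := exists_unitary_mul_diag h₁ (X * W) hXW
  obtain ⟨V, S, hV1, hV2, hSd, hVS⟩ := exists_unitary_mul_diag h₄ (Y * W) hYW
  refine ⟨U, V, W⁻¹, W, C, S, hU1, hU2, hV1, hV2, hWinv', hWinv, hCd, hSd, ?_, ?_⟩
  · rw [← hUC, Matrix.mul_assoc, hWinv, Matrix.mul_one]
  · rw [← hVS, Matrix.mul_assoc, hWinv, Matrix.mul_one]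

end GSVD

section GSVDC
/-- entrywise complex conjugation of a matrix -/
noncomputable def mconj {a b : ℕ} (A : Matrix (Fin a) (Fin b) ℂ) : Matrix (Fin a) (Fin b) ℂ :=
  A.map (starRingEnd ℂ)

lemma mconj_mul {a b c : ℕ} (A : Matrix (Fin a) (Fin b) ℂ) (B : Matrix (Fin b) (Fin c) ℂ) :
    mconj (A * B) = mconj A * mconj B :=
  Matrix.map_mul

lemma mconj_one {a : ℕ} : mconj (1 : Matrix (Fin a) (Fin a) ℂ) = 1 := by
  simp [mconj]

lemma mconj_conjTranspose {a b : ℕ} (A : Matrix (Fin a) (Fin b) ℂ) :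
    (mconj A)ᴴ = mconj Aᴴ := by
  ext i j
  simp [mconj, Matrix.conjTranspose_apply]

lemma mconj_mconj {a b : ℕ} (A : Matrix (Fin a) (Fin b) ℂ) : mconj (mconj A) = A := by
  ext i j
  simp [mconj]

/-- GSVD over `ℂ`, with the additional property that if the input matrices are
(entrywise) self-conjugate, then so are all the output matrices. -/
theorem gsvdC {I₁ I₂ I₄ : ℕ} (h₁ : I₂ ≤ I₁) (h₄ : I₂ ≤ I₄)
    (X : Matrix (Fin I₁) (Fin I₂) ℂ) (Y : Matrix (Fin I₄) (Fin I₂) ℂ) :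
    ∃ (U : Matrix (Fin I₁) (Fin I₁) ℂ) (V : Matrix (Fin I₄) (Fin I₄) ℂ)
      (Z Z' : Matrix (Fin I₂) (Fin I₂) ℂ) (C : Matrix (Fin I₁) (Fin I₂) ℂ)
      (S : Matrix (Fin I₄) (Fin I₂) ℂ),
      Uᴴ * U = 1 ∧ U * Uᴴ = 1 ∧ Vᴴ * V = 1 ∧ V * Vᴴ = 1 ∧
      Z * Z' = 1 ∧ Z' * Z = 1 ∧
      (∀ (i : Fin I₁) (j : Fin I₂), (i : ℕ) ≠ (j : ℕ) → C i j = 0) ∧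
      (∀ (i : Fin I₄) (j : Fin I₂), (i : ℕ) ≠ (j : ℕ) → S i j = 0) ∧
      X = U * C * Z ∧ Y = V * S * Z ∧
      (mconj X = X → mconj Y = Y →
        mconj U = U ∧ mconj V = V ∧ mconj Z = Z ∧ mconj Z' = Z' ∧ mconj C = C ∧ mconj S = S) := by
  classical
  by_cases hreal : mconj X = X ∧ mconj Y = Y
  · -- real case: use the GSVD over ℝ and push forward along `Complex.ofReal`
    obtain ⟨hXr, hYr⟩ := hreal
    set Xr : Matrix (Fin I₁) (Fin I₂) ℝ := X.map Complex.re with hXrdef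
    set Yr : Matrix (Fin I₄) (Fin I₂) ℝ := Y.map Complex.re with hYrdef
    have hXlift : Xr.map (Complex.ofRealHom : ℝ →+* ℂ) = X := by
      ext i j
      have := congrFun (congrFun hXr i) j
      simp only [mconj, Matrix.map_apply] at this ⊢
      exact Complex.conj_eq_iff_re.mp this
    have hYlift : Yr.map (Complex.ofRealHom : ℝ →+* ℂ) = Y := by
      ext i j
      have := congrFun (congrFun hYr i) j
      simp only [mconj, Matrix.map_apply] at this ⊢
      exact Complex.conj_eq_iff_re.mp this
    obtain ⟨U, V, Z, Z', C, S, hU1, hU2, hV1, hV2, hZ1, hZ2, hCd, hSd, hX, hY⟩ :=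
      gsvdK (𝕜 := ℝ) h₁ h₄ Xr Yr
    set φ : ℝ →+* ℂ := Complex.ofRealHom with hφ
    have hmapct : ∀ {a b : ℕ} (M : Matrix (Fin a) (Fin b) ℝ), (M.map φ)ᴴ = Mᴴ.map φ := by
      intro a b M
      ext i j
      simp [Matrix.conjTranspose_apply, Matrix.map_apply, hφ, Complex.conj_ofReal]
    have hmapconj : ∀ {a b : ℕ} (M : Matrix (Fin a) (Fin b) ℝ), mconj (M.map φ) = M.map φ := by
      intro a b M
      ext i j
      simp [mconj, Matrix.map_apply, hφ, Complex.conj_ofReal]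
    refine ⟨U.map φ, V.map φ, Z.map φ, Z'.map φ, C.map φ, S.map φ, ?_, ?_, ?_, ?_, ?_, ?_,
      ?_, ?_, ?_, ?_, ?_⟩
    · rw [hmapct, ← Matrix.map_mul, hU1, Matrix.map_one φ φ.map_zero φ.map_one]
    · rw [hmapct, ← Matrix.map_mul, hU2, Matrix.map_one φ φ.map_zero φ.map_one]
    · rw [hmapct, ← Matrix.map_mul, hV1, Matrix.map_one φ φ.map_zero φ.map_one]
    · rw [hmapct, ← Matrix.map_mul, hV2, Matrix.map_one φ φ.map_zero φ.map_one]
    · rw [← Matrix.map_mul, hZ1, Matrix.map_one φ φ.map_zero φ.map_one]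
    · rw [← Matrix.map_mul, hZ2, Matrix.map_one φ φ.map_zero φ.map_one]
    · intro i j hij
      simp [Matrix.map_apply, hCd i j hij]
    · intro i j hij
      simp [Matrix.map_apply, hSd i j hij]
    · rw [← hXlift, hX, Matrix.map_mul, Matrix.map_mul]
    · rw [← hYlift, hY, Matrix.map_mul, Matrix.map_mul]
    · intro _ _
      exact ⟨hmapconj U, hmapconj V, hmapconj Z, hmapconj Z', hmapconj C, hmapconj S⟩
  · obtain ⟨U, V, Z, Z', C, S, hU1, hU2, hV1, hV2, hZ1, hZ2, hCd, hSd, hX, hY⟩ :=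
      gsvdK (𝕜 := ℂ) h₁ h₄ X Y
    refine ⟨U, V, Z, Z', C, S, hU1, hU2, hV1, hV2, hZ1, hZ2, hCd, hSd, hX, hY, ?_⟩
    intro hXr hYr
    exact absurd ⟨hXr, hYr⟩ hreal

end GSVDC


section Fourier

variable [NeZero n]

lemma sum_char (t : ZMod n) :
    ∑ i : ZMod n, ZMod.stdAddChar (t * i) = if t = 0 then (n : ℂ) else 0 := by
  split_ifs with h
  · simp only [h, zero_mul, AddChar.map_zero_eq_one, Finset.sum_const, Finset.card_univ,
      ZMod.card, nsmul_eq_mul, mul_one]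
  · exact AddChar.sum_eq_zero_of_ne_one (ZMod.isPrimitive_stdAddChar n h)

lemma conj_char (x : ZMod n) :
    (starRingEnd ℂ) (ZMod.stdAddChar x) = ZMod.stdAddChar (-x) := by
  rw [ZMod.stdAddChar_apply, ZMod.stdAddChar_apply, AddChar.map_neg_eq_inv,
    Circle.coe_inv_eq_conj]

lemma sum_char' (t : ZMod n) :
    ∑ i : ZMod n, ZMod.stdAddChar (i * t) = if t = 0 then (n : ℂ) else 0 := by
  rw [← sum_char t]
  exact Finset.sum_congr rfl fun i _ => by rw [mul_comm]

/-- Fourier transform of a tensor (ℂ version). -/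
noncomputable def ft {a b : ℕ} (F : ZMod n → Matrix (Fin a) (Fin b) ℂ) :
    ZMod n → Matrix (Fin a) (Fin b) ℂ :=
  fun j => ∑ k : ZMod n, ZMod.stdAddChar (j * k) • F k

/-- Inverse Fourier transform of a tensor. -/
noncomputable def ift {a b : ℕ} (F : ZMod n → Matrix (Fin a) (Fin b) ℂ) :
    ZMod n → Matrix (Fin a) (Fin b) ℂ :=
  fun k => (n : ℂ)⁻¹ • ∑ j : ZMod n, ZMod.stdAddChar (-(j * k)) • F j

lemma ift_ft {a b : ℕ} (F : ZMod n → Matrix (Fin a) (Fin b) ℂ) : ift (ft F) = F := by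
  funext k
  ext i l
  rw [ift, Matrix.smul_apply, Matrix.sum_apply, smul_eq_mul]
  have hterm : ∀ j : ZMod n, (ZMod.stdAddChar (-(j * k)) • ft F j) i l
      = ∑ m : ZMod n, ZMod.stdAddChar (j * (m - k)) * F m i l := by
    intro j
    rw [Matrix.smul_apply, smul_eq_mul, ft, Matrix.sum_apply, Finset.mul_sum]
    refine Finset.sum_congr rfl fun m _ => ?_
    rw [Matrix.smul_apply, smul_eq_mul, ← mul_assoc, ← AddChar.map_add_eq_mul]
    congr 2
    ring
  rw [Finset.sum_congr rfl fun j _ => hterm j, Finset.sum_comm]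
  have hin : ∀ m : ZMod n, ∑ j : ZMod n, ZMod.stdAddChar (j * (m - k)) * F m i l
      = (if m = k then (n : ℂ) else 0) * F m i l := by
    intro m
    rw [← Finset.sum_mul, sum_char' (m - k)]
    congr 1
    exact if_congr sub_eq_zero rfl rfl
  rw [Finset.sum_congr rfl fun m _ => hin m]
  simp only [ite_mul, zero_mul]
  rw [Finset.sum_ite_eq' Finset.univ k fun m => (n : ℂ) * F m i l]
  simp only [Finset.mem_univ, if_true]
  rw [← mul_assoc, inv_mul_cancel₀ (Nat.cast_ne_zero.mpr (NeZero.ne n)), one_mul]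

lemma ft_ift {a b : ℕ} (F : ZMod n → Matrix (Fin a) (Fin b) ℂ) : ft (ift F) = F := by
  funext j
  ext i l
  rw [ft, Matrix.sum_apply]
  have hterm : ∀ k : ZMod n, (ZMod.stdAddChar (j * k) • ift F k) i l
      = (n : ℂ)⁻¹ * ∑ m : ZMod n, ZMod.stdAddChar ((j - m) * k) * F m i l := by
    intro k
    rw [Matrix.smul_apply, smul_eq_mul, ift, Matrix.smul_apply, smul_eq_mul, Matrix.sum_apply]
    rw [← mul_assoc, mul_comm (ZMod.stdAddChar (j * k)) ((n : ℂ)⁻¹), mul_assoc]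
    congr 1
    rw [Finset.mul_sum]
    refine Finset.sum_congr rfl fun m _ => ?_
    rw [Matrix.smul_apply, smul_eq_mul, ← mul_assoc, ← AddChar.map_add_eq_mul]
    congr 2
    ring
  rw [Finset.sum_congr rfl fun k _ => hterm k, ← Finset.mul_sum, Finset.sum_comm]
  have hin : ∀ m : ZMod n, ∑ k : ZMod n, ZMod.stdAddChar ((j - m) * k) * F m i l
      = (if m = j then (n : ℂ) else 0) * F m i l := by
    intro m
    rw [← Finset.sum_mul, sum_char (j - m)]
    congr 1
    refine if_congr ?_ rfl rfl
    rw [sub_eq_zero]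
    exact eq_comm
  rw [Finset.sum_congr rfl fun m _ => hin m]
  simp only [ite_mul, zero_mul]
  rw [Finset.sum_ite_eq' Finset.univ j fun m => (n : ℂ) * F m i l]
  simp only [Finset.mem_univ, if_true]
  rw [← mul_assoc, inv_mul_cancel₀ (Nat.cast_ne_zero.mpr (NeZero.ne n)), one_mul]


lemma ft_inj {a b : ℕ} {F G : ZMod n → Matrix (Fin a) (Fin b) ℂ} (h : ft F = ft G) : F = G := by
  rw [← ift_ft F, ← ift_ft G, h]

/-- circular convolution of complex tensors -/
noncomputable def cMul {a b c : ℕ} (X : ZMod n → Matrix (Fin a) (Fin b) ℂ)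
    (Y : ZMod n → Matrix (Fin b) (Fin c) ℂ) : ZMod n → Matrix (Fin a) (Fin c) ℂ :=
  fun k => ∑ j : ZMod n, X (k - j) * Y j

noncomputable def cId (n m : ℕ) : ZMod n → Matrix (Fin m) (Fin m) ℂ :=
  fun k => if k = 0 then 1 else 0

lemma ft_cMul {a b c : ℕ} (X : ZMod n → Matrix (Fin a) (Fin b) ℂ)
    (Y : ZMod n → Matrix (Fin b) (Fin c) ℂ) :
    ft (cMul X Y) = fun j => ft X j * ft Y j := by
  funext j
  simp only [ft, cMul]
  have h1 : ∀ k : ZMod n, ZMod.stdAddChar (j * k) • ∑ m : ZMod n, X (k - m) * Y m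
      = ∑ m : ZMod n, ZMod.stdAddChar (j * k) • (X (k - m) * Y m) := fun k => Finset.smul_sum
  rw [Finset.sum_congr rfl fun k _ => h1 k, Finset.sum_comm]
  have h2 : ∀ m : ZMod n, ∑ k : ZMod n, ZMod.stdAddChar (j * k) • (X (k - m) * Y m)
      = (∑ k : ZMod n, ZMod.stdAddChar (j * k) • X k) * (ZMod.stdAddChar (j * m) • Y m) := by
    intro m
    rw [Matrix.sum_mul]
    apply Fintype.sum_equiv (Equiv.subRight m)
    intro k
    rw [Equiv.subRight_apply, Matrix.smul_mul, Matrix.mul_smul, smul_smul,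
      ← AddChar.map_add_eq_mul]
    congr 1
    congr 1
    ring
  rw [Finset.sum_congr rfl fun m _ => h2 m, ← Matrix.mul_sum]

lemma ft_cId {m : ℕ} : ft (cId n m) = fun _ => (1 : Matrix (Fin m) (Fin m) ℂ) := by
  funext j
  simp only [ft, cId]
  have h : ∀ k : ZMod n, ZMod.stdAddChar (j * k) • (if k = (0 : ZMod n) then (1 : Matrix (Fin m) (Fin m) ℂ) else 0)
      = if k = 0 then ZMod.stdAddChar (j * k) • (1 : Matrix (Fin m) (Fin m) ℂ) else 0 := by
    intro k
    split_ifs <;> simp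
  rw [Finset.sum_congr rfl fun k _ => h k, Finset.sum_ite_eq' Finset.univ (0 : ZMod n)]
  simp

lemma ft_transpose {a b : ℕ} (F : ZMod n → Matrix (Fin a) (Fin b) ℂ) (j : ZMod n) :
    ft (fun k => (F (-k))ᵀ) j = (ft F (-j))ᵀ := by
  simp only [ft, Matrix.transpose_sum]
  apply Fintype.sum_equiv (Equiv.neg (ZMod n))
  intro k
  rw [Equiv.neg_apply, Matrix.transpose_smul]
  congr 1
  rw [neg_mul_neg]

/-- complexification of a real tensor -/
noncomputable def cplx {a b : ℕ} (X : ZMod n → Matrix (Fin a) (Fin b) ℝ) :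
    ZMod n → Matrix (Fin a) (Fin b) ℂ :=
  fun k => (X k).map (Complex.ofRealHom : ℝ →+* ℂ)

lemma cplx_inj {a b : ℕ} {X Y : ZMod n → Matrix (Fin a) (Fin b) ℝ}
    (h : cplx X = cplx Y) : X = Y := by
  funext k
  ext i l
  have := congrFun (congrFun (congrFun h k) i) l
  simpa [cplx, Matrix.map_apply] using this

lemma cplx_tMul {a b c : ℕ} (X : ZMod n → Matrix (Fin a) (Fin b) ℝ)
    (Y : ZMod n → Matrix (Fin b) (Fin c) ℝ) :
    cplx (tMul X Y) = cMul (cplx X) (cplx Y) := by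
  funext k
  ext i l
  simp only [cplx, tMul, cMul, Matrix.map_apply, Matrix.sum_apply, Matrix.mul_apply,
    map_sum, _root_.map_mul]

lemma cplx_tTranspose {a b : ℕ} (X : ZMod n → Matrix (Fin a) (Fin b) ℝ) :
    cplx (tTranspose X) = fun k => ((cplx X) (-k))ᵀ := by
  funext k
  ext i l
  simp [cplx, tTranspose, Matrix.map_apply]

lemma cplx_tId {m : ℕ} : cplx (tId n m) = cId n m := by
  funext k
  ext i l
  rw [cplx, tId, cId]
  split_ifs <;> simp [Matrix.map_apply, Matrix.one_apply, apply_ite]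

/-- conjugation symmetry of the Fourier transform of a real tensor -/
lemma ft_cplx_symm {a b : ℕ} (X : ZMod n → Matrix (Fin a) (Fin b) ℝ) (j : ZMod n) :
    ft (cplx X) (-j) = mconj (ft (cplx X) j) := by
  ext i l
  simp only [mconj, Matrix.map_apply, ft, Matrix.sum_apply, map_sum]
  refine Finset.sum_congr rfl fun k _ => ?_
  simp only [Matrix.smul_apply, smul_eq_mul, _root_.map_mul, conj_char, neg_mul]
  congr 1
  simp [cplx, Matrix.map_apply, Complex.conj_ofReal]

/-- a conj-symmetric family has a real inverse Fourier transform -/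
lemma cplx_realize {a b : ℕ} (G : ZMod n → Matrix (Fin a) (Fin b) ℂ)
    (hs : ∀ j, G (-j) = mconj (G j)) :
    cplx (fun k => (ift G k).map Complex.re) = ift G := by
  funext k
  ext i l
  simp only [cplx, Matrix.map_apply, Complex.ofRealHom_eq_coe]
  refine Complex.conj_eq_iff_re.mp ?_
  rw [ift, Matrix.smul_apply, Matrix.sum_apply, smul_eq_mul, _root_.map_mul]
  have h1 : (starRingEnd ℂ) ((n : ℂ)⁻¹) = (n : ℂ)⁻¹ := by
    rw [map_inv₀, Complex.conj_natCast]
  rw [h1, map_sum]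
  congr 1
  apply Fintype.sum_equiv (Equiv.neg (ZMod n))
  intro jj
  rw [Equiv.neg_apply, Matrix.smul_apply, Matrix.smul_apply, smul_eq_mul, smul_eq_mul,
    _root_.map_mul, conj_char]
  congr 1
  · congr 1
    ring
  · have h2 := congrFun (congrFun (hs jj) i) l
    simp only [mconj, Matrix.map_apply] at h2
    rw [h2]


lemma mconj_transpose {a b : ℕ} (M : Matrix (Fin a) (Fin b) ℂ) : (mconj M)ᵀ = Mᴴ := by
  ext i j
  simp [mconj, Matrix.transpose_apply, Matrix.conjTranspose_apply]

lemma ift_entry_zero {a b : ℕ} (G : ZMod n → Matrix (Fin a) (Fin b) ℂ) (i : Fin a) (l : Fin b)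
    (h : ∀ j, G j i l = 0) (k : ZMod n) : (ift G k) i l = 0 := by
  simp [ift, Matrix.smul_apply, Matrix.sum_apply, h]

/-- The tuple type for per-frequency GSVD data. -/
def TupT (I₁ I₂ I₄ : ℕ) :=
  Matrix (Fin I₁) (Fin I₁) ℂ × Matrix (Fin I₄) (Fin I₄) ℂ × Matrix (Fin I₂) (Fin I₂) ℂ ×
    Matrix (Fin I₂) (Fin I₂) ℂ × Matrix (Fin I₁) (Fin I₂) ℂ × Matrix (Fin I₄) (Fin I₂) ℂ

def GSpec {I₁ I₂ I₄ : ℕ} (Xj : Matrix (Fin I₁) (Fin I₂) ℂ) (Yj : Matrix (Fin I₄) (Fin I₂) ℂ)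
    (T : TupT I₁ I₂ I₄) : Prop :=
  T.1ᴴ * T.1 = 1 ∧ T.1 * T.1ᴴ = 1 ∧ T.2.1ᴴ * T.2.1 = 1 ∧ T.2.1 * T.2.1ᴴ = 1 ∧
  T.2.2.1 * T.2.2.2.1 = 1 ∧ T.2.2.2.1 * T.2.2.1 = 1 ∧
  (∀ (i : Fin I₁) (j : Fin I₂), (i : ℕ) ≠ (j : ℕ) → T.2.2.2.2.1 i j = 0) ∧
  (∀ (i : Fin I₄) (j : Fin I₂), (i : ℕ) ≠ (j : ℕ) → T.2.2.2.2.2 i j = 0) ∧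
  Xj = T.1 * T.2.2.2.2.1 * T.2.2.1 ∧ Yj = T.2.1 * T.2.2.2.2.2 * T.2.2.1

noncomputable def mconjT {I₁ I₂ I₄ : ℕ} (T : TupT I₁ I₂ I₄) : TupT I₁ I₂ I₄ :=
  (mconj T.1, mconj T.2.1, mconj T.2.2.1, mconj T.2.2.2.1, mconj T.2.2.2.2.1, mconj T.2.2.2.2.2)

lemma mconjT_mconjT {I₁ I₂ I₄ : ℕ} (T : TupT I₁ I₂ I₄) : mconjT (mconjT T) = T := by
  obtain ⟨U, V, Z, Z', C, S⟩ := T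
  simp [mconjT, mconj_mconj]
  rfl

lemma gspec_conj {I₁ I₂ I₄ : ℕ} {Xj : Matrix (Fin I₁) (Fin I₂) ℂ}
    {Yj : Matrix (Fin I₄) (Fin I₂) ℂ} {T : TupT I₁ I₂ I₄} (h : GSpec Xj Yj T) :
    GSpec (mconj Xj) (mconj Yj) (mconjT T) := by
  obtain ⟨h1, h2, h3, h4, h5, h6, h7, h8, h9, h10⟩ := h
  refine ⟨?_, ?_, ?_, ?_, ?_, ?_, ?_, ?_, ?_, ?_⟩
  · show (mconj T.1)ᴴ * mconj T.1 = 1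
    rw [mconj_conjTranspose, ← mconj_mul, h1, mconj_one]
  · show mconj T.1 * (mconj T.1)ᴴ = 1
    rw [mconj_conjTranspose, ← mconj_mul, h2, mconj_one]
  · show (mconj T.2.1)ᴴ * mconj T.2.1 = 1
    rw [mconj_conjTranspose, ← mconj_mul, h3, mconj_one]
  · show mconj T.2.1 * (mconj T.2.1)ᴴ = 1
    rw [mconj_conjTranspose, ← mconj_mul, h4, mconj_one]
  · show mconj T.2.2.1 * mconj T.2.2.2.1 = 1
    rw [← mconj_mul, h5, mconj_one]
  · show mconj T.2.2.2.1 * mconj T.2.2.1 = 1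
    rw [← mconj_mul, h6, mconj_one]
  · intro i j hij
    show mconj T.2.2.2.2.1 i j = 0
    simp [mconj, h7 i j hij]
  · intro i j hij
    show mconj T.2.2.2.2.2 i j = 0
    simp [mconj, h8 i j hij]
  · show mconj Xj = mconj T.1 * mconj T.2.2.2.2.1 * mconj T.2.2.1
    rw [← mconj_mul, ← mconj_mul, ← h9]
  · show mconj Yj = mconj T.2.1 * mconj T.2.2.2.2.2 * mconj T.2.2.1
    rw [← mconj_mul, ← mconj_mul, ← h10]

lemma gsvdC_tup {I₁ I₂ I₄ : ℕ} (h₁ : I₂ ≤ I₁) (h₄ : I₂ ≤ I₄)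
    (Xj : Matrix (Fin I₁) (Fin I₂) ℂ) (Yj : Matrix (Fin I₄) (Fin I₂) ℂ) :
    ∃ T : TupT I₁ I₂ I₄, GSpec Xj Yj T ∧
      (mconj Xj = Xj → mconj Yj = Yj → mconjT T = T) := by
  obtain ⟨U, V, Z, Z', C, S, p1, p2, p3, p4, p5, p6, p7, p8, p9, p10, p11⟩ :=
    gsvdC h₁ h₄ Xj Yj
  refine ⟨(U, V, Z, Z', C, S), ⟨p1, p2, p3, p4, p5, p6, p7, p8, p9, p10⟩, ?_⟩
  intro hX hY
  obtain ⟨q1, q2, q3, q4, q5, q6⟩ := p11 hX hY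
  simp [mconjT, q1, q2, q3, q4, q5, q6]
  rfl


/-- Existence of the generalized tensor SVD (GTSVD) based on the t-product. -/
theorem gtsvd_exists (n I₁ I₂ I₄ : ℕ) [NeZero n] (h₁ : I₂ ≤ I₁) (h₄ : I₂ ≤ I₄)
    (X : ZMod n → Matrix (Fin I₁) (Fin I₂) ℝ)
    (Y : ZMod n → Matrix (Fin I₄) (Fin I₂) ℝ) :
    ∃ (U : ZMod n → Matrix (Fin I₁) (Fin I₁) ℝ)
      (V : ZMod n → Matrix (Fin I₄) (Fin I₄) ℝ)
      (Z : ZMod n → Matrix (Fin I₂) (Fin I₂) ℝ)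
      (C : ZMod n → Matrix (Fin I₁) (Fin I₂) ℝ)
      (S : ZMod n → Matrix (Fin I₄) (Fin I₂) ℝ),
      tOrthogonal U ∧ tOrthogonal V ∧
      (∃ Z' : ZMod n → Matrix (Fin I₂) (Fin I₂) ℝ,
        tMul Z Z' = tId n I₂ ∧ tMul Z' Z = tId n I₂) ∧
      (∀ (k : ZMod n) (i : Fin I₁) (j : Fin I₂), (i : ℕ) ≠ (j : ℕ) → C k i j = 0) ∧
      (∀ (k : ZMod n) (i : Fin I₄) (j : Fin I₂), (i : ℕ) ≠ (j : ℕ) → S k i j = 0) ∧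
      X = tMul (tMul U C) Z ∧ Y = tMul (tMul V S) Z := by
  classical
  set Xh : ZMod n → Matrix (Fin I₁) (Fin I₂) ℂ := ft (cplx X) with hXh
  set Yh : ZMod n → Matrix (Fin I₄) (Fin I₂) ℂ := ft (cplx Y) with hYh
  have hsX : ∀ j, Xh (-j) = mconj (Xh j) := fun j => ft_cplx_symm X j
  have hsY : ∀ j, Yh (-j) = mconj (Yh j) := fun j => ft_cplx_symm Y j
  have ht : ∀ j : ZMod n, ∃ T : TupT I₁ I₂ I₄, GSpec (Xh j) (Yh j) T ∧
      (mconj (Xh j) = Xh j → mconj (Yh j) = Yh j → mconjT T = T) :=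
    fun j => gsvdC_tup h₁ h₄ (Xh j) (Yh j)
  set t : ZMod n → TupT I₁ I₂ I₄ := fun j => (ht j).choose with htdef
  have htspec : ∀ j, GSpec (Xh j) (Yh j) (t j) ∧
      (mconj (Xh j) = Xh j → mconj (Yh j) = Yh j → mconjT (t j) = t j) :=
    fun j => (ht j).choose_spec
  set TT : ZMod n → TupT I₁ I₂ I₄ :=
    fun j => if j.val ≤ (-j).val then t j else mconjT (t (-j)) with hTTdef
  have hvalinj : ∀ j : ZMod n, j.val = (-j).val → j = -j := by
    intro j h
    conv_lhs => rw [← ZMod.natCast_zmod_val j]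
    rw [h, ZMod.natCast_zmod_val]
  have hTT_pos : ∀ j : ZMod n, j.val ≤ (-j).val → TT j = t j := by
    intro j h
    rw [hTTdef]
    exact if_pos h
  have hTT_neg : ∀ j : ZMod n, ¬(j.val ≤ (-j).val) → TT j = mconjT (t (-j)) := by
    intro j h
    rw [hTTdef]
    exact if_neg h
  have hTTspec : ∀ j, GSpec (Xh j) (Yh j) (TT j) := by
    intro j
    by_cases hc : j.val ≤ (-j).val
    · rw [hTT_pos j hc]
      exact (htspec j).1
    · rw [hTT_neg j hc]
      have hg := gspec_conj (htspec (-j)).1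
      have hx : mconj (Xh (-j)) = Xh j := by rw [← hsX (-j), neg_neg]
      have hy : mconj (Yh (-j)) = Yh j := by rw [← hsY (-j), neg_neg]
      rwa [hx, hy] at hg
  have hTTsym : ∀ j, TT (-j) = mconjT (TT j) := by
    intro j
    rcases lt_trichotomy (j.val) ((-j).val) with hlt | heq | hgt
    · have h1 : TT j = t j := hTT_pos j (le_of_lt hlt)
      have h2 : TT (-j) = mconjT (t j) := by
        have hcond : ¬((-j).val ≤ (-(-j)).val) := by
          rw [neg_neg]
          exact not_le.mpr hlt
        rw [hTT_neg (-j) hcond, neg_neg]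
      rw [h1, h2]
    · have hjj : j = -j := hvalinj j heq
      have h1 : TT j = t j := hTT_pos j (le_of_eq heq)
      have hfix : mconjT (t j) = t j := by
        apply (htspec j).2
        · rw [← hsX j, ← hjj]
        · rw [← hsY j, ← hjj]
      rw [← hjj, h1, hfix]
    · have hcond : (-j).val ≤ (-(-j)).val := by
        rw [neg_neg]
        exact le_of_lt hgt
      have h2 : TT (-j) = t (-j) := hTT_pos (-j) hcond
      have h1 : TT j = mconjT (t (-j)) := hTT_neg j (not_le.mpr hgt)
      rw [h1, h2, mconjT_mconjT]
  set Uh : ZMod n → Matrix (Fin I₁) (Fin I₁) ℂ := fun j => (TT j).1 with hUh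
  set Vh : ZMod n → Matrix (Fin I₄) (Fin I₄) ℂ := fun j => (TT j).2.1 with hVh
  set Zh : ZMod n → Matrix (Fin I₂) (Fin I₂) ℂ := fun j => (TT j).2.2.1 with hZh
  set Z'h : ZMod n → Matrix (Fin I₂) (Fin I₂) ℂ := fun j => (TT j).2.2.2.1 with hZ'h
  set Ch : ZMod n → Matrix (Fin I₁) (Fin I₂) ℂ := fun j => (TT j).2.2.2.2.1 with hCh
  set Sh : ZMod n → Matrix (Fin I₄) (Fin I₂) ℂ := fun j => (TT j).2.2.2.2.2 with hSh
  have hUsym : ∀ j, Uh (-j) = mconj (Uh j) := fun j => congrArg Prod.fst (hTTsym j)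
  have hVsym : ∀ j, Vh (-j) = mconj (Vh j) := fun j => congrArg (fun T => T.2.1) (hTTsym j)
  have hZsym : ∀ j, Zh (-j) = mconj (Zh j) := fun j => congrArg (fun T => T.2.2.1) (hTTsym j)
  have hZ'sym : ∀ j, Z'h (-j) = mconj (Z'h j) :=
    fun j => congrArg (fun T => T.2.2.2.1) (hTTsym j)
  have hCsym : ∀ j, Ch (-j) = mconj (Ch j) :=
    fun j => congrArg (fun T => T.2.2.2.2.1) (hTTsym j)
  have hSsym : ∀ j, Sh (-j) = mconj (Sh j) :=
    fun j => congrArg (fun T => T.2.2.2.2.2) (hTTsym j)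
  set U : ZMod n → Matrix (Fin I₁) (Fin I₁) ℝ := fun k => (ift Uh k).map Complex.re with hU
  set V : ZMod n → Matrix (Fin I₄) (Fin I₄) ℝ := fun k => (ift Vh k).map Complex.re with hV
  set Z : ZMod n → Matrix (Fin I₂) (Fin I₂) ℝ := fun k => (ift Zh k).map Complex.re with hZ
  set Z' : ZMod n → Matrix (Fin I₂) (Fin I₂) ℝ := fun k => (ift Z'h k).map Complex.re with hZ'
  set C : ZMod n → Matrix (Fin I₁) (Fin I₂) ℝ := fun k => (ift Ch k).map Complex.re with hC
  set S : ZMod n → Matrix (Fin I₄) (Fin I₂) ℝ := fun k => (ift Sh k).map Complex.re with hS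
  have hftU : ft (cplx U) = Uh := by rw [hU, cplx_realize Uh hUsym, ft_ift]
  have hftV : ft (cplx V) = Vh := by rw [hV, cplx_realize Vh hVsym, ft_ift]
  have hftZ : ft (cplx Z) = Zh := by rw [hZ, cplx_realize Zh hZsym, ft_ift]
  have hftZ' : ft (cplx Z') = Z'h := by rw [hZ', cplx_realize Z'h hZ'sym, ft_ift]
  have hftC : ft (cplx C) = Ch := by rw [hC, cplx_realize Ch hCsym, ft_ift]
  have hftS : ft (cplx S) = Sh := by rw [hS, cplx_realize Sh hSsym, ft_ift]
  refine ⟨U, V, Z, C, S, ⟨?_, ?_⟩, ⟨?_, ?_⟩, ⟨Z', ?_, ?_⟩, ?_, ?_, ?_, ?_⟩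
  · -- Uᵀ ∗ U = I
    apply cplx_inj
    apply ft_inj
    rw [cplx_tMul, ft_cMul, cplx_tId, ft_cId]
    funext j
    rw [cplx_tTranspose, ft_transpose, hftU, hUsym j, mconj_transpose]
    exact (hTTspec j).1
  · -- U ∗ Uᵀ = I
    apply cplx_inj
    apply ft_inj
    rw [cplx_tMul, ft_cMul, cplx_tId, ft_cId]
    funext j
    rw [cplx_tTranspose, ft_transpose, hftU, hUsym j, mconj_transpose]
    exact (hTTspec j).2.1
  · apply cplx_inj
    apply ft_inj
    rw [cplx_tMul, ft_cMul, cplx_tId, ft_cId]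
    funext j
    rw [cplx_tTranspose, ft_transpose, hftV, hVsym j, mconj_transpose]
    exact (hTTspec j).2.2.1
  · apply cplx_inj
    apply ft_inj
    rw [cplx_tMul, ft_cMul, cplx_tId, ft_cId]
    funext j
    rw [cplx_tTranspose, ft_transpose, hftV, hVsym j, mconj_transpose]
    exact (hTTspec j).2.2.2.1
  · apply cplx_inj
    apply ft_inj
    rw [cplx_tMul, ft_cMul, cplx_tId, ft_cId]
    funext j
    rw [hftZ, hftZ']
    exact (hTTspec j).2.2.2.2.1
  · apply cplx_inj
    apply ft_inj
    rw [cplx_tMul, ft_cMul, cplx_tId, ft_cId]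
    funext j
    rw [hftZ, hftZ']
    exact (hTTspec j).2.2.2.2.2.1
  · intro k i j hij
    have hz : ∀ j', Ch j' i j = 0 := fun j' => (hTTspec j').2.2.2.2.2.2.1 i j hij
    rw [hC]
    show ((ift Ch k).map Complex.re) i j = 0
    rw [Matrix.map_apply, ift_entry_zero Ch i j hz k, Complex.zero_re]
  · intro k i j hij
    have hz : ∀ j', Sh j' i j = 0 := fun j' => (hTTspec j').2.2.2.2.2.2.2.1 i j hij
    rw [hS]
    show ((ift Sh k).map Complex.re) i j = 0
    rw [Matrix.map_apply, ift_entry_zero Sh i j hz k, Complex.zero_re]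
  · apply cplx_inj
    apply ft_inj
    rw [cplx_tMul, ft_cMul]
    funext j
    rw [cplx_tMul, ft_cMul, hftU, hftC, hftZ]
    exact (hTTspec j).2.2.2.2.2.2.2.2.1
  · apply cplx_inj
    apply ft_inj
    rw [cplx_tMul, ft_cMul]
    funext j
    rw [cplx_tMul, ft_cMul, hftV, hftS, hftZ]
    exact (hTTspec j).2.2.2.2.2.2.2.2.2
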